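/- Fix integers p ≥ 1 and N ≥ 1, a partition x_0 < x_1 < ⋯ < x_N, and data y_{n,2k} ∈ ℝ (0 ≤ n ≤ N, 0 ≤ k ≤ p). Then for every 1 ≤ n ≤ N, every 0 ≤ k ≤ p, all real scaling parameters α', α'' and every x ∈ [x_0,x_N], | (q_n(α',·) − q_n(α'',·))^{(2k)}(x) | ≤ |α' − α''| · (2ρπ/3) · Σ_{l=0}^{p−k} ((x_N − x_0)/π)^{2l}. -/

import Mathlib

open Polynomial Set

/-! Auxiliary development for the Lidstone parameter-derivative bound. -/

/-- The recursive constant in the sin-weighted bound. -/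
noncomputable def lidC (L : ℝ) : ℕ → ℝ
  | 0 => 0
  | m + 1 => L ^ 2 / Real.pi ^ 2 * (2 * Real.pi / 3 + lidC L m)

lemma lidC_nonneg (L : ℝ) (m : ℕ) : 0 ≤ lidC L m := by
  induction m with
  | zero => simp [lidC]
  | succ m ih =>
    have hπ := Real.pi_pos
    have h1 : (0:ℝ) ≤ L ^ 2 / Real.pi ^ 2 := by positivity
    have h2 : (0:ℝ) ≤ 2 * Real.pi / 3 + lidC L m := by positivity
    exact mul_nonneg h1 h2

lemma lidC_le (L : ℝ) (m : ℕ) :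
    2 * Real.pi / 3 + lidC L m ≤
      2 * Real.pi / 3 * ∑ l ∈ Finset.range (m + 1), ((L / Real.pi) ^ 2) ^ l := by
  induction m with
  | zero => simp [lidC]
  | succ m ih =>
    rw [geom_sum_succ]
    have hu : (0:ℝ) ≤ (L / Real.pi) ^ 2 := sq_nonneg _
    have hu' : L ^ 2 / Real.pi ^ 2 = (L / Real.pi) ^ 2 := (div_pow L Real.pi 2).symm
    have h2 : L ^ 2 / Real.pi ^ 2 * (2 * Real.pi / 3 + lidC L m) ≤
        (L / Real.pi) ^ 2 * (2 * Real.pi / 3 * ∑ l ∈ Finset.range (m + 1), ((L / Real.pi) ^ 2) ^ l) := by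
      rw [hu']
      exact mul_le_mul_of_nonneg_left ih hu
    have : lidC L (m + 1) = L ^ 2 / Real.pi ^ 2 * (2 * Real.pi / 3 + lidC L m) := rfl
    rw [this]
    nlinarith [h2]

/-- The key sine inequality: `3π s(1-s) ≤ 4 sin(π s)` on `[0,1]`. -/
lemma sin_lower_bound : ∀ s : ℝ, 0 ≤ s → s ≤ 1 →
    3 * Real.pi * (s * (1 - s)) ≤ 4 * Real.sin (Real.pi * s) := by
  have half : ∀ s : ℝ, 0 ≤ s → s ≤ 1 / 2 →
      3 * Real.pi * (s * (1 - s)) ≤ 4 * Real.sin (Real.pi * s) := by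
    intro s h0 h12
    rcases le_or_gt s (1 / 5) with h5 | h5
    · rcases eq_or_lt_of_le h0 with h0' | h0'
      · rw [← h0']; simp
      · have hπ2 : Real.pi < 3.15 := Real.pi_lt_d2
        have hπ3 : (3:ℝ) < Real.pi := Real.pi_gt_three
        have hx0 : 0 < Real.pi * s := mul_pos Real.pi_pos h0'
        have hx1 : Real.pi * s ≤ 1 := by nlinarith
        have hcube := Real.sin_gt_sub_cube hx0
        have h2 : Real.pi ^ 2 * s ^ 2 ≤ 1 + 3 * s := by nlinarith [sq_nonneg s]
        nlinarith [mul_le_mul_of_nonneg_left h2 (le_of_lt hx0)]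
    · have hπ2 : Real.pi < 3.15 := Real.pi_lt_d2
      have hπ3 : (3:ℝ) < Real.pi := Real.pi_gt_three
      have hj := Real.mul_le_sin (x := Real.pi * s) (by positivity)
        (by nlinarith [Real.pi_pos])
      have e : 2 / Real.pi * (Real.pi * s) = 2 * s := by
        field_simp
      rw [e] at hj
      nlinarith [hj, mul_nonneg h0 (sub_nonneg.mpr h5.le)]
  intro s h0 h1
  rcases le_or_gt s (1 / 2) with hs | hs
  · exact half s h0 hs
  · have h := half (1 - s) (by linarith) (by linarith)
    have e : Real.sin (Real.pi * (1 - s)) = Real.sin (Real.pi * s) := by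
      rw [show Real.pi * (1 - s) = Real.pi - Real.pi * s by ring, Real.sin_pi_sub]
    rw [e] at h
    have e2 : 3 * Real.pi * ((1 - s) * (1 - (1 - s))) = 3 * Real.pi * (s * (1 - s)) := by ring
    linarith [e2 ▸ h]

lemma nonneg_of_concaveOn {a b : ℝ} (hab : a < b) {f : ℝ → ℝ}
    (hf : ConcaveOn ℝ (Set.Icc a b) f) (ha : 0 ≤ f a) (hb : 0 ≤ f b)
    {t : ℝ} (ht : t ∈ Set.Icc a b) : 0 ≤ f t := by
  have hne : b - a ≠ 0 := sub_ne_zero.mpr hab.ne'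
  set μ := (b - t) / (b - a) with hμdef
  set lam := (t - a) / (b - a) with hlamdef
  have hμ : 0 ≤ μ := div_nonneg (by linarith [ht.2]) (by linarith)
  have hlam : 0 ≤ lam := div_nonneg (by linarith [ht.1]) (by linarith)
  have hsum : μ + lam = 1 := by
    rw [hμdef, hlamdef, ← add_div, div_eq_one_iff_eq hne]; ring
  have hcomb := hf.2 (Set.left_mem_Icc.mpr hab.le) (Set.right_mem_Icc.mpr hab.le)
    hμ hlam hsum
  have et : μ • a + lam • b = t := by
    simp only [smul_eq_mul, hμdef, hlamdef]
    field_simp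
    ring
  rw [et] at hcomb
  simp only [smul_eq_mul] at hcomb
  nlinarith [mul_nonneg hμ ha, mul_nonneg hlam hb]

/-- One-sided comparison principle. -/
lemma bridge1 (a b : ℝ) (hab : a < b) (Q : Polynomial ℝ) (χ χ' χ'' : ℝ → ℝ)
    (hd1 : ∀ u, HasDerivAt χ (χ' u) u) (hd2 : ∀ u, HasDerivAt χ' (χ'' u) u)
    (ha : Q.eval a ≤ χ a) (hb : Q.eval b ≤ χ b)
    (hsec : ∀ u ∈ Set.Icc a b, χ'' u ≤ (derivative (derivative Q)).eval u) :
    ∀ t ∈ Set.Icc a b, Q.eval t ≤ χ t := by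
  intro t ht
  have hχcont : Continuous χ := by
    rw [continuous_iff_continuousAt]; exact fun u => (hd1 u).continuousAt
  have hcont : ContinuousOn (fun u => χ u - Q.eval u) (Set.Icc a b) :=
    (hχcont.sub Q.continuous).continuousOn
  have hconc : ConcaveOn ℝ (Set.Icc a b) (fun u => χ u - Q.eval u) := by
    apply concaveOn_of_hasDerivWithinAt2_nonpos (convex_Icc a b) hcont
      (f' := fun u => χ' u - (derivative Q).eval u)
      (f'' := fun u => χ'' u - (derivative (derivative Q)).eval u)
    · intro u hu
      exact ((hd1 u).sub (Q.hasDerivAt u)).hasDerivWithinAt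
    · intro u hu
      exact ((hd2 u).sub ((derivative Q).hasDerivAt u)).hasDerivWithinAt
    · intro u hu
      rw [interior_Icc] at hu
      have := hsec u (Set.Ioo_subset_Icc_self hu)
      linarith
  have h0 := nonneg_of_concaveOn hab hconc (by simpa using sub_nonneg.mpr ha)
    (by simpa using sub_nonneg.mpr hb) ht
  simpa using sub_nonneg.mp h0

/-- Two-sided comparison principle. -/
lemma bridge (a b : ℝ) (hab : a < b) (Q : Polynomial ℝ) (χ χ' χ'' : ℝ → ℝ)
    (hd1 : ∀ u, HasDerivAt χ (χ' u) u) (hd2 : ∀ u, HasDerivAt χ' (χ'' u) u)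
    (ha : |Q.eval a| ≤ χ a) (hb : |Q.eval b| ≤ χ b)
    (hsec : ∀ u ∈ Set.Icc a b, |(derivative (derivative Q)).eval u| ≤ -χ'' u) :
    ∀ t ∈ Set.Icc a b, |Q.eval t| ≤ χ t := by
  intro t ht
  have h1 : Q.eval t ≤ χ t := by
    refine bridge1 a b hab Q χ χ' χ'' hd1 hd2 ((le_abs_self _).trans ha)
      ((le_abs_self _).trans hb) (fun u hu => ?_) t ht
    have := hsec u hu
    have h2 := neg_abs_le ((derivative (derivative Q)).eval u)
    linarith
  have h2 : (-Q).eval t ≤ χ t := by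
    refine bridge1 a b hab (-Q) χ χ' χ'' hd1 hd2 ?_ ?_ (fun u hu => ?_) t ht
    · rw [eval_neg]; exact (neg_le_abs _).trans ha
    · rw [eval_neg]; exact (neg_le_abs _).trans hb
    · rw [derivative_neg, derivative_neg, eval_neg]
      have := hsec u hu
      have h3 := le_abs_self ((derivative (derivative Q)).eval u)
      linarith
  rw [eval_neg] at h2
  rw [abs_le]
  exact ⟨by linarith, h1⟩

lemma iteratedDeriv_polyeval (n : ℕ) : ∀ (P : Polynomial ℝ),
    iteratedDeriv n (fun s => P.eval s) = fun t => (derivative^[n] P).eval t := by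
  induction n with
  | zero => intro P; simp
  | succ n ih =>
    intro P
    rw [iteratedDeriv_succ']
    have hderiv : deriv (fun s => P.eval s) = fun s => (derivative P).eval s :=
      funext fun s => P.deriv
    rw [hderiv, ih, Function.iterate_succ_apply]

set_option maxHeartbeats 2000000 in
/-- The key induction: sin-weighted bound for polynomials with bounded even
derivatives at the endpoints. -/
lemma lidstone_key (a b M : ℝ) (hab : a < b) (hM : 0 ≤ M) :
    ∀ m : ℕ, ∀ Q : Polynomial ℝ, Q.natDegree ≤ 2 * m + 1 →
    (∀ j, j ≤ m → |(derivative^[2*j] Q).eval a| ≤ M ∧ |(derivative^[2*j] Q).eval b| ≤ M) →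
    ∀ t ∈ Set.Icc a b,
      |Q.eval t| ≤ M * (1 + lidC (b - a) m * Real.sin (Real.pi * (t - a) / (b - a))) := by
  have hL : 0 < b - a := sub_pos.mpr hab
  have hLne : b - a ≠ 0 := hL.ne'
  have hπ : (0:ℝ) < Real.pi := Real.pi_pos
  have hπne : Real.pi ≠ 0 := hπ.ne'
  intro m
  induction m with
  | zero =>
    intro Q hdeg hbd t ht
    have h0 := hbd 0 le_rfl
    simp only [Nat.mul_zero, Function.iterate_zero, id_eq] at h0
    have hQ'' : derivative (derivative Q) = 0 := by
      have h1 : (derivative Q).natDegree ≤ 0 := by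
        have := Polynomial.natDegree_derivative_le Q
        omega
      rw [Polynomial.eq_C_of_natDegree_le_zero h1, derivative_C]
    have := bridge a b hab Q (fun _ => M) (fun _ => 0) (fun _ => 0)
      (fun u => hasDerivAt_const u M) (fun u => hasDerivAt_const u 0)
      h0.1 h0.2 (by intro u hu; rw [hQ'']; simp) t ht
    simpa [lidC] using this
  | succ m ih =>
    intro Q hdeg hbd t ht
    set L := b - a with hLdef
    set cm := lidC L m with hcmdef
    have hcm : 0 ≤ cm := lidC_nonneg L m
    -- the second derivative polynomial
    set Q2 := derivative (derivative Q) with hQ2def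
    have hQ2deg : Q2.natDegree ≤ 2 * m + 1 := by
      rw [hQ2def]
      have h1 := Polynomial.natDegree_derivative_le Q
      have h2 := Polynomial.natDegree_derivative_le (derivative Q)
      omega
    have hQ2bd : ∀ j, j ≤ m → |(derivative^[2*j] Q2).eval a| ≤ M ∧
        |(derivative^[2*j] Q2).eval b| ≤ M := by
      intro j hj
      have hiter : derivative^[2*j] Q2 = derivative^[2*(j+1)] Q := by
        rw [hQ2def, show 2*(j+1) = 2*j + 1 + 1 by ring,
          Function.iterate_succ_apply, Function.iterate_succ_apply]
      rw [hiter]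
      exact hbd (j+1) (by omega)
    have hIH := ih Q2 hQ2deg hQ2bd
    -- comparison functions
    set w : ℝ → ℝ := fun u => Real.sin (Real.pi * (u - a) / L) with hwdef
    set χ : ℝ → ℝ := fun u => M * (1 + (u - a) * (b - u) / 2 + cm * (L / Real.pi) ^ 2 * w u)
      with hχdef
    set χ' : ℝ → ℝ := fun u =>
      M * ((a + b - 2 * u) / 2 +
        cm * (L / Real.pi) ^ 2 * (Real.cos (Real.pi * (u - a) / L) * (Real.pi / L))) with hχ'def
    set χ'' : ℝ → ℝ := fun u => -(M * (1 + cm * w u)) with hχ''def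
    have hu : ∀ u : ℝ, HasDerivAt (fun v : ℝ => Real.pi * (v - a) / L) (Real.pi / L) u := by
      intro u
      have h := (((hasDerivAt_id u).sub_const a).const_mul Real.pi).div_const L
      simpa using h
    have hsin : ∀ u : ℝ, HasDerivAt (fun v => Real.sin (Real.pi * (v - a) / L))
        (Real.cos (Real.pi * (u - a) / L) * (Real.pi / L)) u := fun u =>
      (Real.hasDerivAt_sin _).comp u (hu u)
    have hcos : ∀ u : ℝ, HasDerivAt (fun v => Real.cos (Real.pi * (v - a) / L))
        (-Real.sin (Real.pi * (u - a) / L) * (Real.pi / L)) u := fun u =>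
      (Real.hasDerivAt_cos _).comp u (hu u)
    have hd1 : ∀ u, HasDerivAt χ (χ' u) u := by
      intro u
      have hquad : HasDerivAt (fun v : ℝ => (v - a) * (b - v) / 2) ((a + b - 2 * u) / 2) u := by
        have h := (((hasDerivAt_id u).sub_const a).mul
          ((hasDerivAt_const u b).sub (hasDerivAt_id u))).div_const 2
        refine h.congr_deriv ?_
        simp only [Pi.sub_apply, id_eq]
        ring
      have h := (((hasDerivAt_const u (1:ℝ)).add hquad).add
        ((hsin u).const_mul (cm * (L / Real.pi) ^ 2))).const_mul M
      have hveq : χ' u = M * (0 + (a + b - 2 * u) / 2 +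
          cm * (L / Real.pi) ^ 2 * (Real.cos (Real.pi * (u - a) / L) * (Real.pi / L))) := by
        simp only [hχ'def]
        ring
      rw [hveq]
      exact h
    have hd2 : ∀ u, HasDerivAt χ' (χ'' u) u := by
      intro u
      have hlin : HasDerivAt (fun v : ℝ => (a + b - 2 * v) / 2) (-1) u := by
        have h := ((hasDerivAt_const u (a + b)).sub ((hasDerivAt_id u).const_mul 2)).div_const 2
        exact h.congr_deriv (by norm_num)
      have h := (hlin.add
        (((hcos u).mul_const (Real.pi / L)).const_mul (cm * (L / Real.pi) ^ 2))).const_mul M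
      have hveq : χ'' u = M * (-1 + cm * (L / Real.pi) ^ 2 *
          (-Real.sin (Real.pi * (u - a) / L) * (Real.pi / L) * (Real.pi / L))) := by
        simp only [hχ''def, hwdef]
        field_simp
        ring
      rw [hveq]
      exact h
    have hend_a : |Q.eval a| ≤ χ a := by
      have h0 := hbd 0 (by omega)
      simp only [Nat.mul_zero, Function.iterate_zero, id_eq] at h0
      have : χ a = M := by
        simp [hχdef, hwdef]
      rw [this]; exact h0.1
    have hend_b : |Q.eval b| ≤ χ b := by
      have h0 := hbd 0 (by omega)
      simp only [Nat.mul_zero, Function.iterate_zero, id_eq] at h0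
      have : χ b = M := by
        simp only [hχdef, hwdef]
        rw [show Real.pi * (b - a) / L = Real.pi by
          rw [hLdef, mul_div_assoc, div_self (sub_ne_zero.mpr hab.ne'), mul_one]]
        simp
      rw [this]; exact h0.2
    have hsec : ∀ u ∈ Set.Icc a b, |Q2.eval u| ≤ -χ'' u := by
      intro u hu'
      have := hIH u hu'
      simp only [hχ''def, neg_neg]
      calc |Q2.eval u| ≤ M * (1 + lidC (b - a) m * Real.sin (Real.pi * (u - a) / (b - a))) := this
        _ = M * (1 + cm * w u) := by simp only [hcmdef, hwdef, hLdef]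
    have hmain := bridge a b hab Q χ χ' χ'' hd1 hd2 hend_a hend_b hsec t ht
    -- now compare χ t with the target
    have hwt0 : 0 ≤ w t := by
      apply Real.sin_nonneg_of_nonneg_of_le_pi
      · have : 0 ≤ t - a := by linarith [ht.1]
        positivity
      · rw [div_le_iff₀ hL]
        have : t - a ≤ L := by rw [hLdef]; linarith [ht.2]
        nlinarith
    have hquad_le : (t - a) * (b - t) / 2 ≤ 2 * L ^ 2 / (3 * Real.pi) * w t := by
      have hs0 : 0 ≤ (t - a) / L := div_nonneg (by linarith [ht.1]) hL.le
      have hs1 : (t - a) / L ≤ 1 := by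
        rw [div_le_one hL, hLdef]; linarith [ht.2]
      have hsin_lb := sin_lower_bound ((t - a) / L) hs0 hs1
      have e : (t - a) / L * (1 - (t - a) / L) = (t - a) * (b - t) / L ^ 2 := by
        have hbt : b - t = L - (t - a) := by rw [hLdef]; ring
        have h1 : 1 - (t - a) / L = (b - t) / L := by
          field_simp [hLne]
          rw [hLdef]
          ring
        rw [h1, div_mul_div_comm, ← pow_two]
      rw [e] at hsin_lb
      have hws : w t = Real.sin (Real.pi * ((t - a) / L)) := by
        simp only [hwdef, mul_div_assoc]
      rw [hws]
      calc (t - a) * (b - t) / 2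
          = L ^ 2 / (6 * Real.pi) * (3 * Real.pi * ((t - a) * (b - t) / L ^ 2)) := by
            field_simp [hLne, Real.pi_ne_zero]
            ring
        _ ≤ L ^ 2 / (6 * Real.pi) * (4 * Real.sin (Real.pi * ((t - a) / L))) :=
            mul_le_mul_of_nonneg_left hsin_lb (by positivity)
        _ = 2 * L ^ 2 / (3 * Real.pi) * Real.sin (Real.pi * ((t - a) / L)) := by
            field_simp [Real.pi_ne_zero]
            ring
    have hχle : χ t ≤ M * (1 + lidC L (m+1) * w t) := by
      have hlid : lidC L (m+1) = L ^ 2 / Real.pi ^ 2 * (2 * Real.pi / 3 + cm) := rfl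
      simp only [hχdef]
      rw [hlid]
      apply mul_le_mul_of_nonneg_left _ hM
      have e1 : L ^ 2 / Real.pi ^ 2 * (2 * Real.pi / 3 + cm) * w t
          = 2 * L ^ 2 / (3 * Real.pi) * w t + cm * (L / Real.pi) ^ 2 * w t := by
        field_simp [Real.pi_ne_zero]
      rw [e1]
      linarith [hquad_le]
    calc |Q.eval t| ≤ χ t := hmain
      _ ≤ M * (1 + lidC L (m+1) * w t) := hχle
      _ = M * (1 + lidC (b - a) (m+1) * Real.sin (Real.pi * (t - a) / (b - a))) := by
          simp only [hwdef, hLdef]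

/-- For the Lidstone interpolating polynomials `q n (β, ·)` (of degree at most
`2p+1`, with derivative data depending affinely on the scaling parameter `β`),
the `2k`-th derivative of the difference `q n (α', ·) - q n (α'', ·)` is bounded by
`|α' - α''| · (2ρπ/3) · ∑_{l=0}^{p-k} ((x N - x 0)/π)^(2l)` on `[x 0, x N]`,
where `ρ = max_{0 ≤ k ≤ p} max {|y 0 k|, |y N k|}`. -/
theorem lidstone_q_parameter_derivative_bound
    (p N : ℕ) (hp : 1 ≤ p) (hN : 1 ≤ N)
    (x : ℕ → ℝ) (hx : ∀ n < N, x n < x (n + 1))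
    (y : ℕ → ℕ → ℝ)
    (ρ : ℝ)
    (hρ : ρ = (Finset.range (p + 1)).sup'
      (Finset.nonempty_range_iff.mpr p.succ_ne_zero)
      (fun k => max |y 0 k| |y N k|))
    (n : ℕ) (hn1 : 1 ≤ n) (hn2 : n ≤ N)
    (q : ℝ → ℝ → ℝ)
    (hq : ∀ β : ℝ,
      (∃ P : Polynomial ℝ, P.natDegree ≤ 2 * p + 1 ∧ ∀ t, q β t = P.eval t) ∧
      ∀ l ≤ p,
        iteratedDeriv (2 * l) (q β) (x 0) =
          ((x n - x (n - 1)) / (x N - x 0)) ^ (2 * l) * y (n - 1) l - β * y 0 l ∧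
        iteratedDeriv (2 * l) (q β) (x N) =
          ((x n - x (n - 1)) / (x N - x 0)) ^ (2 * l) * y n l - β * y N l)
    (k : ℕ) (hk : k ≤ p) (α' α'' : ℝ) (t : ℝ) (ht : t ∈ Set.Icc (x 0) (x N)) :
    |iteratedDeriv (2 * k) (fun s => q α' s - q α'' s) t| ≤
      |α' - α''| * (2 * ρ * Real.pi / 3) *
        ∑ l ∈ Finset.range (p - k + 1), ((x N - x 0) / Real.pi) ^ (2 * l) := by
  have hπ : (0:ℝ) < Real.pi := Real.pi_pos
  -- x 0 < x N
  have hmono : ∀ m, m ≤ N → 1 ≤ m → x 0 < x m := by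
    intro m
    induction m with
    | zero => omega
    | succ m ihm =>
      intro hm1 _
      rcases Nat.eq_zero_or_pos m with rfl | hpos
      · exact hx 0 (by omega)
      · exact lt_trans (ihm (by omega) hpos) (hx m (by omega))
  have hab : x 0 < x N := hmono N le_rfl hN
  -- extract polynomials
  obtain ⟨⟨P₁, hdeg₁, heval₁⟩, hval₁⟩ := hq α'
  obtain ⟨⟨P₂, hdeg₂, heval₂⟩, hval₂⟩ := hq α''
  set R := P₁ - P₂ with hRdef
  have hg : (fun s => q α' s - q α'' s) = fun s => R.eval s := by
    funext s
    rw [heval₁ s, heval₂ s, hRdef, eval_sub]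
  -- endpoint values of iterated derivatives of R
  have hRbd : ∀ l, l ≤ p →
      (derivative^[2*l] R).eval (x 0) = (α'' - α') * y 0 l ∧
      (derivative^[2*l] R).eval (x N) = (α'' - α') * y N l := by
    intro l hl
    have hiter : derivative^[2*l] R = derivative^[2*l] P₁ - derivative^[2*l] P₂ :=
      Polynomial.iterate_derivative_sub
    have h₁0 : (derivative^[2*l] P₁).eval (x 0) =
        ((x n - x (n - 1)) / (x N - x 0)) ^ (2 * l) * y (n - 1) l - α' * y 0 l := by
      have := (hval₁ l hl).1
      rwa [show q α' = fun s => P₁.eval s from funext heval₁,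
        iteratedDeriv_polyeval (2*l) P₁] at this
    have h₂0 : (derivative^[2*l] P₂).eval (x 0) =
        ((x n - x (n - 1)) / (x N - x 0)) ^ (2 * l) * y (n - 1) l - α'' * y 0 l := by
      have := (hval₂ l hl).1
      rwa [show q α'' = fun s => P₂.eval s from funext heval₂,
        iteratedDeriv_polyeval (2*l) P₂] at this
    have h₁N : (derivative^[2*l] P₁).eval (x N) =
        ((x n - x (n - 1)) / (x N - x 0)) ^ (2 * l) * y n l - α' * y N l := by
      have := (hval₁ l hl).2
      rwa [show q α' = fun s => P₁.eval s from funext heval₁,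
        iteratedDeriv_polyeval (2*l) P₁] at this
    have h₂N : (derivative^[2*l] P₂).eval (x N) =
        ((x n - x (n - 1)) / (x N - x 0)) ^ (2 * l) * y n l - α'' * y N l := by
      have := (hval₂ l hl).2
      rwa [show q α'' = fun s => P₂.eval s from funext heval₂,
        iteratedDeriv_polyeval (2*l) P₂] at this
    constructor
    · rw [hiter, eval_sub, h₁0, h₂0]; ring
    · rw [hiter, eval_sub, h₁N, h₂N]; ring
  -- ρ facts
  have hρ_ge : ∀ l, l ≤ p → |y 0 l| ≤ ρ ∧ |y N l| ≤ ρ := by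
    intro l hl
    have hmem : l ∈ Finset.range (p + 1) := Finset.mem_range.mpr (by omega)
    have hle := Finset.le_sup' (f := fun k => max |y 0 k| |y N k|) hmem
    rw [← hρ] at hle
    exact ⟨le_trans (le_max_left _ _) hle, le_trans (le_max_right _ _) hle⟩
  have hρ0 : 0 ≤ ρ := le_trans (abs_nonneg (y 0 0)) (hρ_ge 0 (by omega)).1
  set M := |α' - α''| * ρ with hMdef
  have hM : 0 ≤ M := mul_nonneg (abs_nonneg _) hρ0
  -- the polynomial Q = 2k-th derivative of R
  set Q := derivative^[2*k] R with hQdef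
  set m := p - k with hmdef
  have hRdeg : R.natDegree ≤ 2*p + 1 := by
    refine le_trans (Polynomial.natDegree_sub_le P₁ P₂) ?_
    exact max_le hdeg₁ hdeg₂
  have hQdeg : Q.natDegree ≤ 2*m + 1 := by
    rw [hQdef]
    have := Polynomial.natDegree_iterate_derivative R (2*k)
    omega
  have hQbd : ∀ j, j ≤ m → |(derivative^[2*j] Q).eval (x 0)| ≤ M ∧
      |(derivative^[2*j] Q).eval (x N)| ≤ M := by
    intro j hj
    have hiter : derivative^[2*j] Q = derivative^[2*(j+k)] R := by
      rw [hQdef, show 2*(j+k) = 2*j + 2*k by ring, Function.iterate_add_apply]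
    have hjk : j + k ≤ p := by omega
    obtain ⟨hv0, hvN⟩ := hRbd (j+k) hjk
    obtain ⟨hy0, hyN⟩ := hρ_ge (j+k) hjk
    rw [hiter, hv0, hvN]
    constructor
    · rw [abs_mul, abs_sub_comm]
      exact mul_le_mul_of_nonneg_left hy0 (abs_nonneg _)
    · rw [abs_mul, abs_sub_comm]
      exact mul_le_mul_of_nonneg_left hyN (abs_nonneg _)
  -- apply the key lemma
  have hkey := lidstone_key (x 0) (x N) M hab hM m Q hQdeg hQbd t ht
  -- rewrite the goal's LHS
  have hLHS : iteratedDeriv (2*k) (fun s => q α' s - q α'' s) t = Q.eval t := by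
    rw [hg, iteratedDeriv_polyeval (2*k) R, hQdef]
  rw [hLHS]
  -- bound the sin-weighted constant
  set L := x N - x 0 with hLdef
  have hL : 0 < L := sub_pos.mpr hab
  have hsin_le : Real.sin (Real.pi * (t - x 0) / L) ≤ 1 := Real.sin_le_one _
  have hsin_ge : 0 ≤ Real.sin (Real.pi * (t - x 0) / L) := by
    apply Real.sin_nonneg_of_nonneg_of_le_pi
    · have : 0 ≤ t - x 0 := by linarith [ht.1]
      positivity
    · rw [div_le_iff₀ hL]
      have : t - x 0 ≤ L := by rw [hLdef]; linarith [ht.2]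
      nlinarith
  have hc0 := lidC_nonneg L m
  have hstep1 : |Q.eval t| ≤ M * (1 + lidC L m) := by
    refine le_trans hkey ?_
    apply mul_le_mul_of_nonneg_left _ hM
    nlinarith [hc0, hsin_le]
  have hsum_eq : ∑ l ∈ Finset.range (m + 1), ((L / Real.pi) ^ 2) ^ l
      = ∑ l ∈ Finset.range (m + 1), (L / Real.pi) ^ (2*l) := by
    apply Finset.sum_congr rfl
    intro l _
    rw [pow_mul]
  have hstep2 : 1 + lidC L m ≤
      2 * Real.pi / 3 * ∑ l ∈ Finset.range (m + 1), (L / Real.pi) ^ (2*l) := by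
    rw [← hsum_eq]
    have := lidC_le L m
    have hπ3 : (3:ℝ) < Real.pi := Real.pi_gt_three
    linarith
  have hfinal : |Q.eval t| ≤
      M * (2 * Real.pi / 3 * ∑ l ∈ Finset.range (m + 1), (L / Real.pi) ^ (2*l)) := by
    refine le_trans hstep1 (mul_le_mul_of_nonneg_left hstep2 hM)
  calc |Q.eval t| ≤
      M * (2 * Real.pi / 3 * ∑ l ∈ Finset.range (m + 1), (L / Real.pi) ^ (2*l)) := hfinal
    _ = |α' - α''| * (2 * ρ * Real.pi / 3) *
        ∑ l ∈ Finset.range (p - k + 1), ((x N - x 0) / Real.pi) ^ (2 * l) := by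
        rw [hMdef, hLdef, hmdef]; ring
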